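/- Let (M, ℬ, μ, f) be a measure-preserving system, τ > 0 a real number, and let {U_n}, {V_n} be nested sequences of measurable sets with V_n ⊆ U_n, μ(V_n) > 0 for each n, μ(U_n) → 0, and μ(U_n \ V_n)/μ(U_n) → 0 as n → ∞. Then for every k ∈ ℕ, |μ({x : Σ_{i=0}^{⌊τ/μ(U_n)⌋−1} 1_{U_n}(f^i(x)) = k}) − μ({x : Σ_{i=0}^{⌊τ/μ(V_n)⌋−1} 1_{V_n}(f^i(x)) = k})| → 0 as n → ∞. -/

import Mathlib

open MeasureTheory Filter Topology

/-- The number of indices `0 ≤ i < N` with `f^[i] x ∈ U` (entry-times count). -/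
noncomputable def hitCount {M : Type*} (f : M → M) (U : Set M) (N : ℕ) (x : M) : ℕ :=
  ∑ i ∈ Finset.range N, U.indicator (fun _ => 1) (f^[i] x)

/-- If `V n ⊆ U n` are nested sequences with `μ(U n) → 0` and
`μ(U n \ V n)/μ(U n) → 0`, then the entry-times distributions of `U n` and `V n`
(with their respective Kac normalizations `⌊τ/μ(U n)⌋` and `⌊τ/μ(V n)⌋`) are
asymptotically the same. -/
theorem entry_times_inner_approximation
    {M : Type*} [MeasurableSpace M] (μ : Measure M) [IsProbabilityMeasure μ]
    (f : M → M) (hf : MeasurePreserving f μ μ)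
    (τ : ℝ) (hτ : 0 < τ)
    (U V : ℕ → Set M) (hUmeas : ∀ n, MeasurableSet (U n)) (hVmeas : ∀ n, MeasurableSet (V n))
    (hUnested : ∀ n, U (n + 1) ⊆ U n) (hVnested : ∀ n, V (n + 1) ⊆ V n)
    (hVU : ∀ n, V n ⊆ U n) (hVpos : ∀ n, 0 < μ (V n))
    (hU0 : Tendsto (fun n => μ (U n)) atTop (nhds 0))
    (hratio : Tendsto (fun n => (μ (U n \ V n)).toReal / (μ (U n)).toReal) atTop (nhds 0))
    (k : ℕ) :
    Tendsto (fun n =>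
        |(μ {x | hitCount f (U n) ⌊τ / (μ (U n)).toReal⌋₊ x = k}).toReal -
          (μ {x | hitCount f (V n) ⌊τ / (μ (V n)).toReal⌋₊ x = k}).toReal|)
      atTop (nhds 0) := by
  have key : ∀ n, |(μ {x | hitCount f (U n) ⌊τ / (μ (U n)).toReal⌋₊ x = k}).toReal -
          (μ {x | hitCount f (V n) ⌊τ / (μ (V n)).toReal⌋₊ x = k}).toReal|
        ≤ 2 * τ * ((μ (U n \ V n)).toReal / (μ (U n)).toReal) + (μ (U n)).toReal := by
    intro n
    set a := (μ (U n)).toReal with ha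
    set b := (μ (V n)).toReal with hb
    set d := (μ (U n \ V n)).toReal with hd
    have hbpos : 0 < b := ENNReal.toReal_pos (hVpos n).ne' (measure_ne_top μ _)
    have hVleU : μ (V n) ≤ μ (U n) := measure_mono (hVU n)
    have hba : b ≤ a := ENNReal.toReal_mono (measure_ne_top μ _) hVleU
    have hapos : 0 < a := hbpos.trans_le hba
    set NU := ⌊τ / a⌋₊ with hNU
    set NV := ⌊τ / b⌋₊ with hNV
    have hNUNV : NU ≤ NV := Nat.floor_le_floor (by gcongr)
    have hd_eq : d = a - b := by
      rw [hd, measure_diff (hVU n) (hVmeas n).nullMeasurableSet (measure_ne_top μ _),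
        ENNReal.toReal_sub_of_le hVleU (measure_ne_top μ _)]
    have hdnonneg : 0 ≤ d := ENNReal.toReal_nonneg
    set A := ⋃ i ∈ Finset.range NU, f^[i] ⁻¹' (U n \ V n) with hA
    set B := ⋃ i ∈ Finset.Ico NU NV, f^[i] ⁻¹' (V n) with hB
    -- if x avoids A and B, the two hit counts agree
    have hEq : ∀ x, x ∉ A → x ∉ B → hitCount f (U n) NU x = hitCount f (V n) NV x := by
      intro x hxA hxB
      have hUeqV : ∀ i ∈ Finset.range NU,
          (U n).indicator (fun _ => (1:ℕ)) (f^[i] x) = (V n).indicator (fun _ => 1) (f^[i] x) := by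
        intro i hi
        have hnot : f^[i] x ∉ U n \ V n := fun h => hxA (Set.mem_biUnion hi h)
        by_cases hV : f^[i] x ∈ V n
        · rw [Set.indicator_of_mem (hVU n hV), Set.indicator_of_mem hV]
        · rw [Set.indicator_of_notMem hV,
            Set.indicator_of_notMem (fun hU => hnot ⟨hU, hV⟩)]
      have hzero : ∀ i ∈ Finset.Ico NU NV, (V n).indicator (fun _ => (1:ℕ)) (f^[i] x) = 0 := by
        intro i hi
        have : f^[i] x ∉ V n := fun h => hxB (Set.mem_biUnion hi h)
        simp [Set.indicator_of_notMem this]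
      unfold hitCount
      rw [Finset.sum_congr rfl hUeqV,
        ← Finset.sum_range_add_sum_Ico (fun i => (V n).indicator (fun _ => (1:ℕ)) (f^[i] x)) hNUNV,
        Finset.sum_eq_zero hzero, add_zero]
    set E1 := {x | hitCount f (U n) NU x = k} with hE1
    set E2 := {x | hitCount f (V n) NV x = k} with hE2
    have hsub1 : E1 ⊆ E2 ∪ A ∪ B := by
      intro x hx
      by_cases hA' : x ∈ A
      · exact Or.inl (Or.inr hA')
      by_cases hB' : x ∈ B
      · exact Or.inr hB'
      · exact Or.inl (Or.inl (by rw [hE2, Set.mem_setOf_eq, ← hEq x hA' hB']; exact hx))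
    have hsub2 : E2 ⊆ E1 ∪ A ∪ B := by
      intro x hx
      by_cases hA' : x ∈ A
      · exact Or.inl (Or.inr hA')
      by_cases hB' : x ∈ B
      · exact Or.inr hB'
      · exact Or.inl (Or.inl (by rw [hE1, Set.mem_setOf_eq, hEq x hA' hB']; exact hx))
    -- measure bounds on A and B
    have hmuA : (μ A).toReal ≤ (NU : ℝ) * d := by
      have h1' : μ A ≤ (NU : ENNReal) * μ (U n \ V n) := by
        calc μ A ≤ ∑ i ∈ Finset.range NU, μ (f^[i] ⁻¹' (U n \ V n)) :=
              measure_biUnion_finset_le _ _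
          _ = ∑ _i ∈ Finset.range NU, μ (U n \ V n) := by
              refine Finset.sum_congr rfl fun i _ => ?_
              exact (hf.iterate i).measure_preimage
                ((hUmeas n).diff (hVmeas n)).nullMeasurableSet
          _ = (NU : ENNReal) * μ (U n \ V n) := by
              simp [Finset.sum_const, nsmul_eq_mul]
      calc (μ A).toReal ≤ ((NU : ENNReal) * μ (U n \ V n)).toReal :=
            ENNReal.toReal_mono (by finiteness) h1'
        _ = (NU : ℝ) * d := by
            rw [ENNReal.toReal_mul]; simp [hd]
    have hmuB : (μ B).toReal ≤ ((NV - NU : ℕ) : ℝ) * b := by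
      have h1 : μ B ≤ ((NV - NU : ℕ) : ENNReal) * μ (V n) := by
        calc μ B ≤ ∑ i ∈ Finset.Ico NU NV, μ (f^[i] ⁻¹' (V n)) :=
              measure_biUnion_finset_le _ _
          _ = ∑ _i ∈ Finset.Ico NU NV, μ (V n) := by
              refine Finset.sum_congr rfl fun i _ => ?_
              exact (hf.iterate i).measure_preimage (hVmeas n).nullMeasurableSet
          _ = ((NV - NU : ℕ) : ENNReal) * μ (V n) := by
              simp [Finset.sum_const, nsmul_eq_mul, Nat.card_Ico]
      calc (μ B).toReal ≤ (((NV - NU : ℕ) : ENNReal) * μ (V n)).toReal :=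
            ENNReal.toReal_mono (by finiteness) h1
        _ = ((NV - NU : ℕ) : ℝ) * b := by
            rw [ENNReal.toReal_mul, ENNReal.toReal_natCast]
    -- real bounds
    have hNUle : (NU : ℝ) ≤ τ / a := Nat.floor_le (by positivity)
    have hNUgt : τ / a - 1 < (NU : ℝ) := by
      have := Nat.lt_floor_add_one (τ / a)
      linarith
    have hNVle : (NV : ℝ) ≤ τ / b := Nat.floor_le (by positivity)
    have hAbound : (μ A).toReal ≤ τ * (d / a) := by
      calc (μ A).toReal ≤ (NU : ℝ) * d := hmuA
        _ ≤ (τ / a) * d := by nlinarith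
        _ = τ * (d / a) := by field_simp
    have hBbound : (μ B).toReal ≤ τ * (d / a) + b := by
      have hcast : ((NV - NU : ℕ) : ℝ) = (NV : ℝ) - NU := by
        exact Nat.cast_sub hNUNV
      have h1 : (NV : ℝ) * b ≤ τ := by
        have := mul_le_mul_of_nonneg_right hNVle hbpos.le
        rwa [div_mul_cancel₀ _ hbpos.ne'] at this
      have h2 : τ * b / a - b ≤ (NU : ℝ) * b := by
        have := mul_le_mul_of_nonneg_right (le_of_lt hNUgt) hbpos.le
        calc τ * b / a - b = (τ / a - 1) * b := by ring_nf
          _ ≤ (NU : ℝ) * b := by nlinarith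
      calc (μ B).toReal ≤ ((NV - NU : ℕ) : ℝ) * b := hmuB
        _ = (NV : ℝ) * b - (NU : ℝ) * b := by rw [hcast]; ring
        _ ≤ τ - (τ * b / a - b) := by linarith
        _ = τ * ((a - b) / a) + b := by field_simp; ring
        _ = τ * (d / a) + b := by rw [hd_eq]
    -- combine
    have hfin : ∀ s : Set M, μ s ≠ ⊤ := fun s => measure_ne_top μ s
    have hcomb : ∀ X Y : Set M, X ⊆ Y ∪ A ∪ B →
        (μ X).toReal ≤ (μ Y).toReal + (μ A).toReal + (μ B).toReal := by
      intro X Y hXY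
      have h1 : μ X ≤ μ Y + μ A + μ B :=
        le_trans (measure_mono hXY)
          (le_trans (measure_union_le _ _) (add_le_add_left (measure_union_le _ _) _))
      have h2 := ENNReal.toReal_mono (ENNReal.add_ne_top.2 ⟨ENNReal.add_ne_top.2 ⟨hfin _, hfin _⟩, hfin _⟩) h1
      rwa [ENNReal.toReal_add (ENNReal.add_ne_top.2 ⟨hfin _, hfin _⟩) (hfin _),
        ENNReal.toReal_add (hfin _) (hfin _)] at h2
    have hc1 := hcomb E1 E2 hsub1
    have hc2 := hcomb E2 E1 hsub2
    rw [abs_sub_le_iff]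
    constructor <;> nlinarith [hAbound, hBbound, hba]
  have hbound : Tendsto (fun n => 2 * τ * ((μ (U n \ V n)).toReal / (μ (U n)).toReal)
      + (μ (U n)).toReal) atTop (nhds 0) := by
    have h1 : Tendsto (fun n => 2 * τ * ((μ (U n \ V n)).toReal / (μ (U n)).toReal))
        atTop (nhds 0) := by
      simpa using hratio.const_mul (2 * τ)
    have h2 : Tendsto (fun n => (μ (U n)).toReal) atTop (nhds 0) := by
      have := (ENNReal.tendsto_toReal (a := 0) (by simp)).comp hU0
      simpa [Function.comp_def] using this
    simpa using h1.add h2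
  exact squeeze_zero (fun n => abs_nonneg _) key hbound
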